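/- arXiv:2107.10978 — 2 statements merged into one kernel-verified Lean document; each statement's English description precedes it below -/
import Mathlib

section
/- For any real a > 0 and positive integer n, ∑_{k=1}^{n} ψ₁(k+a)² = 2∑_{k=1}^{n} ψ₁(k+a)/(k+a) + (1/2)[−ψ₂(a+n+1) + ψ₂(a+1) + 2(a+n)ψ₁(a+n+1)² − 2aψ₁(a+1)²]. -/
open Finset

/-- The `m`-th polygamma function: the `(m+1)`-th derivative of `log ∘ Γ`. -/
noncomputable def psi (m : ℕ) (x : ℝ) : ℝ :=
  iteratedDeriv (m + 1) (fun y => Real.log (Real.Gamma y)) x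

section Aux
open Real Set

lemma gamma_analytic {x : ℝ} (hx : 0 < x) : AnalyticAt ℝ Real.Gamma x := by
  have hC : AnalyticAt ℂ Complex.Gamma (x : ℂ) := by
    have hopen : IsOpen {s : ℂ | 0 < s.re} := isOpen_lt continuous_const Complex.continuous_re
    have hdiff : DifferentiableOn ℂ Complex.Gamma {s : ℂ | 0 < s.re} := by
      intro s hs
      refine (Complex.differentiableAt_Gamma s fun m => ?_).differentiableWithinAt
      intro h
      rw [h] at hs
      simp only [Set.mem_setOf_eq, Complex.neg_re, Complex.natCast_re] at hs
      linarith [Nat.cast_nonneg (α := ℝ) m]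
    exact (hdiff.analyticOnNhd hopen) _ (by simpa using hx)
  have h1 : AnalyticAt ℝ (fun y : ℝ => (Complex.Gamma (y : ℂ)).re) x := by
    exact (Complex.reCLM.analyticAt _).comp ((hC.restrictScalars).comp (Complex.ofRealCLM.analyticAt x))
  refine h1.congr ?_
  filter_upwards with y
  rw [Complex.Gamma_ofReal]
  rfl


lemma logGamma_contDiffOn : ContDiffOn ℝ ⊤ (fun y => Real.log (Real.Gamma y)) (Ioi 0) := by
  intro x hx
  exact ((Real.contDiffAt_log.mpr (Real.Gamma_pos_of_pos hx).ne').comp x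
    ((gamma_analytic hx).contDiffAt)).contDiffWithinAt

lemma iter_within {g : ℝ → ℝ} {n : ℕ} {x : ℝ} (hx : x ∈ Ioi (0:ℝ)) :
    iteratedDerivWithin n g (Ioi 0) x = iteratedDeriv n g x := by
  rw [iteratedDerivWithin_eq_iteratedFDerivWithin, iteratedDeriv_eq_iteratedFDeriv,
    iteratedFDerivWithin_of_isOpen n isOpen_Ioi hx]

lemma psi_rec (m : ℕ) {x : ℝ} (hx : 0 < x) :
    psi m (x + 1) = iteratedDeriv (m + 1) Real.log x + psi m x := by
  set L := fun y => Real.log (Real.Gamma y) with hLdef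
  have h1 : psi m (x + 1) = iteratedDeriv (m + 1) (fun z => L (z + 1)) x := by
    rw [psi, iteratedDeriv_comp_add_const]
  have hev : (fun z => L (z + 1)) =ᶠ[nhds x] (fun z => Real.log z + L z) := by
    filter_upwards [eventually_gt_nhds hx] with z hz
    simp only [hLdef]
    rw [Real.Gamma_add_one hz.ne', Real.log_mul hz.ne' (Real.Gamma_pos_of_pos hz).ne']
  have hlog : ContDiffOn ℝ ⊤ Real.log (Ioi 0) :=
    fun y hy => (Real.contDiffAt_log.mpr (ne_of_gt hy)).contDiffWithinAt
  have hx' : x ∈ Ioi (0:ℝ) := hx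
  rw [h1, hev.iteratedDeriv_eq, show (fun z => Real.log z + L z) = Real.log + L from rfl,
    ← iter_within hx', iteratedDerivWithin_add hx' (isOpen_Ioi.uniqueDiffOn)
      ((hlog x hx').of_le le_top) ((logGamma_contDiffOn x hx').of_le le_top),
    iter_within hx', iter_within hx']
  rfl

lemma log_iter2 {x : ℝ} (hx : x ≠ 0) : iteratedDeriv 2 Real.log x = -(1 / x ^ 2) := by
  rw [show (2:ℕ) = 1 + 1 from rfl, iteratedDeriv_succ', Real.deriv_log', iteratedDeriv_one]
  rw [deriv_inv]
  field_simp

lemma log_iter3 {x : ℝ} (hx : x ≠ 0) : iteratedDeriv 3 Real.log x = 2 / x ^ 3 := by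
  rw [show (3:ℕ) = 2 + 1 from rfl, iteratedDeriv_succ', Real.deriv_log',
    show (2:ℕ) = 1 + 1 from rfl, iteratedDeriv_succ]
  have h1 : deriv (Inv.inv : ℝ → ℝ) = fun y : ℝ => -(y ^ 2)⁻¹ := by
    funext y; exact deriv_inv
  rw [iteratedDeriv_one, h1]
  have h2 : HasDerivAt (fun y : ℝ => -(y ^ 2)⁻¹) (2 / x ^ 3) x := by
    have := ((hasDerivAt_pow 2 x).inv (pow_ne_zero 2 hx)).neg
    refine this.congr_deriv ?_
    set_option maxRecDepth 10000 in field_simp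
    ring
  exact h2.deriv

lemma psi1_rec {x : ℝ} (hx : 0 < x) : psi 1 (x + 1) = psi 1 x - 1 / x ^ 2 := by
  rw [psi_rec 1 hx, log_iter2 hx.ne']; ring

lemma psi2_rec {x : ℝ} (hx : 0 < x) : psi 2 (x + 1) = psi 2 x + 2 / x ^ 3 := by
  rw [psi_rec 2 hx, log_iter3 hx.ne']; ring

open Finset in
lemma main_aux (a : ℝ) (ha : 0 < a) : ∀ n : ℕ,
    ∑ k ∈ Icc 1 n, (psi 1 ((k : ℝ) + a))^2 =
      2 * ∑ k ∈ Icc 1 n, psi 1 ((k : ℝ) + a) / ((k : ℝ) + a) +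
        (1/2) * (-psi 2 (a + n + 1) + psi 2 (a + 1) + 2 * (a + n) * (psi 1 (a + n + 1))^2
          - 2 * a * (psi 1 (a + 1))^2) := by
  intro n
  induction n with
  | zero =>
    rw [show Finset.Icc 1 0 = (∅ : Finset ℕ) from rfl]
    simp only [Finset.sum_empty, Nat.cast_zero]
    rw [show a + (0:ℝ) + 1 = a + 1 by ring]
    ring
  | succ n ih =>
    have hc : (0:ℝ) < a + n + 1 := by positivity
    rw [Finset.sum_Icc_succ_top (Nat.one_le_iff_ne_zero.mpr (Nat.succ_ne_zero n)),
        Finset.sum_Icc_succ_top (Nat.one_le_iff_ne_zero.mpr (Nat.succ_ne_zero n))]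
    push_cast
    rw [show ((n:ℝ) + 1) + a = a + n + 1 by ring, show a + ((n:ℝ) + 1) = a + n + 1 by ring,
        psi1_rec hc, psi2_rec hc]
    set S1 := ∑ k ∈ Icc 1 n, (psi 1 ((k : ℝ) + a))^2 with hS1
    set S2 := ∑ k ∈ Icc 1 n, psi 1 ((k : ℝ) + a) / ((k : ℝ) + a) with hS2
    set p := psi 1 (a + n + 1) with hp
    set c := a + (n : ℝ) + 1 with hcdef
    have hc0 : c ≠ 0 := hc.ne'
    rw [show a + (n:ℝ) = c - 1 from by rw [hcdef]; ring] at ih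
    field_simp
    linear_combination (2 * c ^ 3) * ih

end Aux

theorem stmt_12 (a : ℝ) (ha : 0 < a) (n : ℕ) (hn : 0 < n) :
    ∑ k ∈ Icc 1 n, (psi 1 ((k : ℝ) + a))^2 =
      2 * ∑ k ∈ Icc 1 n, psi 1 ((k : ℝ) + a) / ((k : ℝ) + a) +
        (1/2) * (-psi 2 (a + n + 1) + psi 2 (a + 1) + 2 * (a + n) * (psi 1 (a + n + 1))^2 - 2 * a * (psi 1 (a + 1))^2) := by
  exact main_aux a ha n
end

section
/- For positive integers m ≤ n, ∑_{k=1}^{m} (n−k)!/(m−k)! · ψ₀(k) = n!/((m−1)!(n−m+1)) · [ψ₀(n+1) − ψ₀(n−m+1) + ψ₀(1) − 1/(n−m+1)]. -/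
open Finset

/-- Harmonic number `Hh l = ∑_{j=1}^{l} 1/j`. -/
noncomputable def Hh (l : ℕ) : ℝ := ∑ i ∈ range l, (1:ℝ)/(i+1)

lemma Hh_succ (l : ℕ) : Hh (l+1) = Hh l + 1/((l:ℝ)+1) := by
  simp [Hh, Finset.sum_range_succ]

lemma cast_fact_pred {m : ℕ} (hm : 0 < m) :
    (m.factorial : ℝ) = m * ((m-1).factorial : ℝ) := by
  rw [← Nat.mul_factorial_pred hm.ne']; push_cast; ring

lemma sumA (d m : ℕ) (hm : 1 ≤ m) :
    ∑ i ∈ range m, ((d+i).factorial : ℝ) / (i.factorial : ℝ)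
      = ((m+d).factorial : ℝ) / (((m-1).factorial : ℝ) * ((d:ℝ)+1)) := by
  induction m with
  | zero => omega
  | succ m ih =>
    simp only [Nat.add_sub_cancel]
    rcases Nat.eq_zero_or_pos m with rfl | hm'
    · rw [show 1+d = d+1 by omega, Nat.factorial_succ]
      push_cast; simp; field_simp
    · rw [Finset.sum_range_succ, ih hm']
      have hf2 : ((m+1+d).factorial : ℝ) = ((m:ℝ)+1+d) * (m+d).factorial := by
        rw [show m+1+d = (m+d)+1 by omega, Nat.factorial_succ]; push_cast; ring
      have hf3 : ((d+m).factorial : ℝ) = ((m+d).factorial : ℝ) := by rw [add_comm d m]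
      rw [hf2, hf3, cast_fact_pred hm']
      have h1 : (0:ℝ) < (m-1).factorial := by positivity
      have h3 : (0:ℝ) < (d:ℝ)+1 := by positivity
      have hm0 : (0:ℝ) < m := by exact_mod_cast hm'
      field_simp
      ring

lemma sumC (p e : ℕ) :
    ∑ i ∈ range p, ((e+i).factorial : ℝ) / ((i.factorial : ℝ) * ((p:ℝ) - i))
      = ((p+e).factorial : ℝ) / (p.factorial : ℝ) * (Hh (p+e) - Hh e) := by
  induction e with
  | zero =>
    have : ∑ i ∈ range p, ((0+i).factorial : ℝ) / ((i.factorial : ℝ) * ((p:ℝ) - i))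
        = ∑ i ∈ range p, (1:ℝ)/((p:ℝ) - i) := by
      apply Finset.sum_congr rfl
      intro i hi
      have hi' : i < p := Finset.mem_range.mp hi
      have : ((p:ℝ) - i) ≠ 0 := by
        have : (i:ℝ) < p := by exact_mod_cast hi'
        linarith
      rw [Nat.zero_add]
      field_simp
    rw [this]
    have hrefl := Finset.sum_range_reflect (fun i => (1:ℝ)/((p:ℝ) - i)) p
    rw [← hrefl]
    have : ∑ j ∈ range p, (1:ℝ)/((p:ℝ) - ↑(p - 1 - j)) = ∑ j ∈ range p, (1:ℝ)/((j:ℝ)+1) := by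
      apply Finset.sum_congr rfl
      intro j hj
      have hj' : j < p := Finset.mem_range.mp hj
      have h1 : p - 1 - j = p - (j+1) := by omega
      have h2 : ((p - (j+1) : ℕ) : ℝ) = (p:ℝ) - (j+1) := by
        have : j + 1 ≤ p := hj'
        push_cast [Nat.cast_sub this]
        ring
      rw [h1, h2]
      ring_nf
    rw [this]
    have hf : (p.factorial:ℝ) ≠ 0 := by positivity
    simp [Hh, div_self hf]
  | succ e ih =>
    rcases Nat.eq_zero_or_pos p with rfl | hp
    · simp
    · have hstep : ∑ i ∈ range p, ((e+1+i).factorial : ℝ) / ((i.factorial : ℝ) * ((p:ℝ) - i))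
          = ((p:ℝ)+e+1) * ∑ i ∈ range p, ((e+i).factorial : ℝ) / ((i.factorial : ℝ) * ((p:ℝ) - i))
            - ∑ i ∈ range p, ((e+i).factorial : ℝ) / (i.factorial : ℝ) := by
        rw [Finset.mul_sum, ← Finset.sum_sub_distrib]
        apply Finset.sum_congr rfl
        intro i hi
        have hi' : i < p := Finset.mem_range.mp hi
        have hpi : ((p:ℝ) - i) ≠ 0 := by
          have : (i:ℝ) < p := by exact_mod_cast hi'
          linarith
        have hfac : ((e+1+i).factorial : ℝ) = ((e:ℝ)+i+1) * ((e+i).factorial : ℝ) := by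
          rw [show e+1+i = (e+i)+1 by omega, Nat.factorial_succ]; push_cast; ring
        have hif : ((i.factorial : ℝ)) ≠ 0 := by positivity
        rw [hfac]
        field_simp
        ring
      rw [hstep, ih, sumA e p hp]
      have hfp : ((p+(e+1)).factorial : ℝ) = ((p:ℝ)+e+1) * ((p+e).factorial : ℝ) := by
        rw [show p+(e+1) = (p+e)+1 by omega, Nat.factorial_succ]; push_cast; ring
      have hHp : Hh (p+(e+1)) = Hh (p+e) + 1/((p:ℝ)+e+1) := by
        rw [show p+(e+1) = (p+e)+1 by omega, Hh_succ]; push_cast; ring_nf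
      rw [hfp, hHp, Hh_succ, cast_fact_pred hp]
      have h1 : ((p+e).factorial : ℝ) ≠ 0 := by positivity
      have h2 : ((p-1).factorial : ℝ) ≠ 0 := by positivity
      have h3 : (0:ℝ) < (e:ℝ)+1 := by positivity
      have h4 : (0:ℝ) < (p:ℝ) := by exact_mod_cast hp
      have h5 : (0:ℝ) < (p:ℝ)+e+1 := by positivity
      field_simp
      ring

lemma sumB (d m : ℕ) (hm : 1 ≤ m) :
    ∑ i ∈ range m, ((d+i).factorial : ℝ) / (i.factorial : ℝ) * Hh (m-1-i)
      = ((m+d).factorial : ℝ) / (((m-1).factorial : ℝ) * ((d:ℝ)+1)) * (Hh (m+d) - Hh (d+1)) := by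
  induction m with
  | zero => omega
  | succ m ih =>
    simp only [Nat.add_sub_cancel]
    rcases Nat.eq_zero_or_pos m with rfl | hm'
    · simp [Hh, show 1+d=d+1 by omega]
    · rw [Finset.sum_range_succ]
      have hsplit : ∑ i ∈ range m, ((d+i).factorial : ℝ) / (i.factorial : ℝ) * Hh (m-i)
          = (∑ i ∈ range m, ((d+i).factorial : ℝ) / (i.factorial : ℝ) * Hh (m-1-i))
            + ∑ i ∈ range m, ((d+i).factorial : ℝ) / ((i.factorial : ℝ) * ((m:ℝ) - i)) := by
        rw [← Finset.sum_add_distrib]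
        apply Finset.sum_congr rfl
        intro i hi
        have hi' : i < m := Finset.mem_range.mp hi
        have h1 : m - i = (m-1-i) + 1 := by omega
        have h2 : ((m-1-i : ℕ):ℝ) = (m:ℝ) - 1 - i := by
          have : 1 + i ≤ m := by omega
          push_cast [Nat.cast_sub (by omega : i ≤ m-1), Nat.cast_sub (by omega : 1 ≤ m)]
          ring
        rw [h1, Hh_succ, h2, mul_add,
          show (m:ℝ) - 1 - i + 1 = (m:ℝ) - i from by ring, mul_one_div, div_div]
      rw [hsplit, ih hm', sumC m d]
      have hf2 : ((m+1+d).factorial : ℝ) = ((m:ℝ)+1+d) * ((m+d).factorial : ℝ) := by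
        rw [show m+1+d = (m+d)+1 by omega, Nat.factorial_succ]; push_cast; ring
      have hH1 : Hh (m+1+d) = Hh (m+d) + 1/((m:ℝ)+d+1) := by
        rw [show m+1+d = (m+d)+1 by omega, Hh_succ]; push_cast; ring_nf
      have hH2 : Hh (d+1) = Hh d + 1/((d:ℝ)+1) := Hh_succ d
      rw [hf2, hH1, hH2, cast_fact_pred hm']
      have h1 : ((m+d).factorial : ℝ) ≠ 0 := by positivity
      have h2 : ((m-1).factorial : ℝ) ≠ 0 := by positivity
      have h3 : (0:ℝ) < (d:ℝ)+1 := by positivity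
      have h4 : (0:ℝ) < (m:ℝ) := by exact_mod_cast hm'
      have h5 : (0:ℝ) < (m:ℝ)+d+1 := by positivity
      simp only [Hh, Nat.add_eq, Nat.add_zero, Nat.sub_self]
      field_simp
      ring

lemma diffGammaLog {x : ℝ} (hx : 0 < x) :
    DifferentiableAt ℝ (fun y => Real.log (Real.Gamma y)) x := by
  have hΓ : Real.Gamma x ≠ 0 := (Real.Gamma_pos_of_pos hx).ne'
  have hdiffΓ : DifferentiableAt ℝ Real.Gamma x :=
    Real.differentiableAt_Gamma
      (fun n => ((lt_of_le_of_lt (neg_nonpos.mpr (Nat.cast_nonneg n)) hx).ne'))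
  exact hdiffΓ.log hΓ

lemma psi0_rec (x : ℝ) (hx : 0 < x) : psi 0 (x + 1) = psi 0 x + 1 / x := by
  have heq : (fun y => Real.log (Real.Gamma (y + 1))) =ᶠ[nhds x]
      (fun y => Real.log y + Real.log (Real.Gamma y)) := by
    filter_upwards [eventually_gt_nhds hx] with y hy
    rw [Real.Gamma_add_one hy.ne', Real.log_mul hy.ne' (Real.Gamma_pos_of_pos hy).ne']
  have h1 : deriv (fun y => Real.log (Real.Gamma (y + 1))) x
      = psi 0 (x + 1) := by
    rw [deriv_comp_add_const (fun y => Real.log (Real.Gamma y)) 1 x]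
    simp [psi, iteratedDeriv_one]
  have h2 : deriv (fun y => Real.log y + Real.log (Real.Gamma y)) x
      = 1 / x + psi 0 x := by
    rw [deriv_fun_add (Real.differentiableAt_log hx.ne') (diffGammaLog hx)]
    simp [psi, iteratedDeriv_one, Real.deriv_log, one_div]
  rw [← h1, heq.deriv_eq, h2, add_comm]

lemma psi0_nat (l : ℕ) : psi 0 ((l:ℝ) + 1) = psi 0 1 + Hh l := by
  induction l with
  | zero => simp [Hh]
  | succ l ih =>
    have hl : (0:ℝ) < (l:ℝ) + 1 := by positivity
    have := psi0_rec ((l:ℝ) + 1) hl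
    push_cast
    rw [this, ih, Hh_succ]
    ring

theorem stmt_16 (m n : ℕ) (hm : 0 < m) (hmn : m ≤ n) :
    ∑ k ∈ Icc 1 m, ((Nat.factorial (n - k) : ℝ) / (Nat.factorial (m - k) : ℝ)) * psi 0 (k : ℝ) =
      (Nat.factorial n : ℝ) / ((Nat.factorial (m - 1) : ℝ) * ((n : ℝ) - m + 1)) *
        (psi 0 ((n : ℝ) + 1) - psi 0 ((n : ℝ) - m + 1) + psi 0 1 - 1 / ((n : ℝ) - m + 1)) := by
  obtain ⟨d, rfl⟩ : ∃ d, n = m + d := ⟨n - m, by omega⟩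
  set c : ℝ := psi 0 1 with hc
  -- rewrite the RHS psi values
  have hcast1 : ((m + d : ℕ) : ℝ) - (m:ℝ) + 1 = (d:ℝ) + 1 := by push_cast; ring
  have hψn : psi 0 (((m + d : ℕ) : ℝ) + 1) = c + Hh (m + d) := psi0_nat (m + d)
  have hψd : psi 0 (((m + d : ℕ) : ℝ) - (m:ℝ) + 1) = c + Hh d := by
    rw [hcast1]
    exact_mod_cast psi0_nat d
  -- transform the LHS into a range sum, reflected
  have hL : ∑ k ∈ Icc 1 m, ((Nat.factorial (m + d - k) : ℝ) / (Nat.factorial (m - k) : ℝ))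
        * psi 0 (k : ℝ)
      = ∑ i ∈ range m, ((d + i).factorial : ℝ) / (i.factorial : ℝ) * (c + Hh (m - 1 - i)) := by
    rw [← Finset.Ico_add_one_right_eq_Icc, Finset.sum_Ico_eq_sum_range]
    rw [← Finset.sum_range_reflect (fun i => ((d + i).factorial : ℝ) / (i.factorial : ℝ)
      * (c + Hh (m - 1 - i))) m]
    apply Finset.sum_congr rfl
    intro i hi
    have hi' : i < m := Finset.mem_range.mp hi
    have e1 : d + (m - 1 - i) = m + d - (1 + i) := by omega
    have e2 : m - 1 - (m - 1 - i) = i := by omega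
    have e3 : m - (1 + i) = m - 1 - i := by omega
    have e4 : psi 0 ((1 + i : ℕ) : ℝ) = c + Hh i := by
      rw [show ((1 + i : ℕ) : ℝ) = (i:ℝ) + 1 from by push_cast; ring]
      exact psi0_nat i
    simp only [e1, e2, e3, e4]
  rw [hL, hψn, hψd, hcast1]
  have hsplit : ∑ i ∈ range m, ((d + i).factorial : ℝ) / (i.factorial : ℝ) * (c + Hh (m - 1 - i))
      = c * (∑ i ∈ range m, ((d + i).factorial : ℝ) / (i.factorial : ℝ))
        + ∑ i ∈ range m, ((d + i).factorial : ℝ) / (i.factorial : ℝ) * Hh (m - 1 - i) := by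
    rw [Finset.mul_sum, ← Finset.sum_add_distrib]
    apply Finset.sum_congr rfl
    intro i _
    ring
  rw [hsplit, sumA d m hm, sumB d m hm, Hh_succ]
  have h2 : ((m-1).factorial : ℝ) ≠ 0 := by positivity
  have h3 : (0:ℝ) < (d:ℝ)+1 := by positivity
  field_simp
  ring
end
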